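/- (Two-level variance decomposition of the gradient noise.) Let K ≥ 2, 1 ≤ L ≤ K, and for each k ∈ {1,…,K} let g_k : {1,…,N_k} → ℝ^M with N_k ≥ 2, mean a_k = (1/N_k) Σ_n g_k(n), batch size 1 ≤ B_k ≤ N_k, and epoch number E_k ≥ 1. Let ā = (1/K) Σ_k a_k. Then the two-level average — uniformly over subsets S ⊆ {1,…,K} of cardinality L and, independently for each k, uniformly over tuples of E_k batches of size B_k from {1,…,N_k} — of ‖(1/L) Σ_{ℓ∈S} m_ℓ − ā‖², where m_ℓ = (1/(E_ℓ B_ℓ)) Σ_{e=1}^{E_ℓ} Σ_{b∈S_{ℓ,e}} g_ℓ(b), equals ((K−L)/(L(K−1))) · (1/K) Σ_{k=1}^K ‖a_k − ā‖² + (1/(KL)) Σ_{k=1}^K τ_{s,k} · (1/N_k) Σ_{n=1}^{N_k} ‖g_k(n) − a_k‖², where τ_{s,k} = (N_k − B_k)/((N_k − 1) B_k E_k). -/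

import Mathlib

open Finset
set_option linter.unusedVariables false
set_option linter.unusedSectionVars false
set_option maxHeartbeats 1000000

section S1

-- counting lemma
lemma count_subset_powersetCard {ι : Type*} [Fintype ι] [DecidableEq ι] (T : Finset ι) {r : ℕ}
    (hT : T.card ≤ r) :
    ((Finset.powersetCard r (Finset.univ : Finset ι)).filter (fun s => T ⊆ s)).card
      = (Fintype.card ι - T.card).choose (r - T.card) := by
  have h : ((Finset.powersetCard r (Finset.univ : Finset ι)).filter (fun s => T ⊆ s)).card
      = (Finset.powersetCard (r - T.card) Tᶜ).card := by
    apply Finset.card_nbij' (i := fun s => s \ T) (j := fun u => u ∪ T)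
    · intro s hs
      simp only [mem_coe, mem_filter, mem_powersetCard_univ] at hs
      simp only [mem_coe, mem_powersetCard]
      constructor
      · intro x hx
        simp only [mem_sdiff] at hx
        simp [hx.2]
      · rw [card_sdiff_of_subset hs.2, hs.1]
    · intro u hu
      simp only [mem_coe, mem_powersetCard] at hu
      simp only [mem_coe, mem_filter, mem_powersetCard_univ]
      have hdisj : Disjoint u T := by
        rw [Finset.disjoint_right]
        intro x hxT hxu
        have := hu.1 hxu
        simp [hxT] at this
      refine ⟨?_, subset_union_right⟩
      rw [card_union_of_disjoint hdisj, hu.2]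
      omega
    · intro s hs
      simp only [mem_coe, mem_filter] at hs
      exact sdiff_union_of_subset hs.2
    · intro u hu
      simp only [mem_coe, mem_powersetCard] at hu
      apply union_sdiff_cancel_right
      rw [Finset.disjoint_right]
      intro x hxT hxu
      have := hu.1 hxu
      simp [hxT] at this
  rw [h, card_powersetCard, card_compl]

end S1

section S2


lemma count_mem_powersetCard {ι : Type*} [Fintype ι] [DecidableEq ι] (i : ι) {r : ℕ}
    (hr : 1 ≤ r) :
    ((Finset.powersetCard r (Finset.univ : Finset ι)).filter (fun s => i ∈ s)).card
      = (Fintype.card ι - 1).choose (r - 1) := by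
  have := count_subset_powersetCard (ι := ι) {i} (r := r) (by simpa using hr)
  simpa using this

lemma count_pair_powersetCard {ι : Type*} [Fintype ι] [DecidableEq ι] {i j : ι} (hij : i ≠ j)
    {r : ℕ} (hr : 2 ≤ r) :
    ((Finset.powersetCard r (Finset.univ : Finset ι)).filter (fun s => i ∈ s ∧ j ∈ s)).card
      = (Fintype.card ι - 2).choose (r - 2) := by
  have hc : ({i, j} : Finset ι).card = 2 := by rw [card_insert_of_notMem (by simpa using hij)]; simp
  have := count_subset_powersetCard (ι := ι) {i, j} (r := r) (by omega)
  rw [hc] at this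
  rw [← this]
  congr 1
  apply filter_congr
  intro s _
  simp [insert_subset_iff]

lemma count_pair_powersetCard_one {ι : Type*} [Fintype ι] [DecidableEq ι] {i j : ι} (hij : i ≠ j) :
    ((Finset.powersetCard 1 (Finset.univ : Finset ι)).filter (fun s => i ∈ s ∧ j ∈ s)).card
      = 0 := by
  rw [Finset.card_eq_zero, Finset.filter_eq_empty_iff]
  intro s hs
  rw [mem_powersetCard_univ, Finset.card_eq_one] at hs
  obtain ⟨a, rfl⟩ := hs
  simp only [mem_singleton]
  rintro ⟨rfl, rfl⟩; exact hij rfl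

-- choose identities
lemma choose_id1 {n r : ℕ} (hr : 1 ≤ r) : (n - 1).choose (r - 1) * n = n.choose r * r := by
  rcases n with _ | n
  · simp [Nat.choose_eq_zero_of_lt hr]
  rcases r with _ | r
  · omega
  rw [Nat.mul_comm]
  simpa using Nat.add_one_mul_choose_eq n r

lemma choose_id2 {n r : ℕ} (hr : 2 ≤ r) (hn : 2 ≤ n) :
    (n - 2).choose (r - 2) * (n * (n - 1)) = n.choose r * (r * (r - 1)) := by
  obtain ⟨n', rfl⟩ : ∃ n', n = n' + 2 := ⟨n - 2, by omega⟩
  obtain ⟨r', rfl⟩ : ∃ r', r = r' + 2 := ⟨r - 2, by omega⟩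
  simp only [Nat.add_sub_cancel]
  have h1 := Nat.add_one_mul_choose_eq (n' + 1) (r' + 1)
  have h2 := Nat.add_one_mul_choose_eq n' r'
  -- h1 : (n'+2) * (n'+1).choose (r'+1) = (n'+2).choose (r'+2) * (r'+2)
  -- h2 : (n'+1) * n'.choose r' = (n'+1).choose (r'+1) * (r'+1)
  have e1 : n' + 2 - 1 = n' + 1 := by omega
  have e2 : r' + 2 - 1 = r' + 1 := by omega
  rw [e1, e2]
  zify at h1 h2 ⊢
  linear_combination (n' + 2 : ℤ) * h2 + (r' + 1 : ℤ) * h1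

end S2

section S3

variable {V : Type*} [NormedAddCommGroup V] [InnerProductSpace ℝ V]

lemma sum_powersetCard_sum {ι : Type*} [Fintype ι] [DecidableEq ι] {W : Type*} [AddCommMonoid W]
    (r : ℕ) (x : ι → W) :
    ∑ s ∈ Finset.powersetCard r (Finset.univ : Finset ι), ∑ i ∈ s, x i
      = ∑ i, ((Finset.powersetCard r (Finset.univ : Finset ι)).filter
          (fun s => i ∈ s)).card • x i := by
  have h1 : ∀ s ∈ Finset.powersetCard r (Finset.univ : Finset ι),
      ∑ i ∈ s, x i = ∑ i ∈ Finset.univ, if i ∈ s then x i else 0 := by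
    intro s _
    rw [Finset.sum_ite_mem, Finset.univ_inter]
  rw [Finset.sum_congr rfl h1, Finset.sum_comm]
  refine Finset.sum_congr rfl fun i _ => ?_
  rw [← Finset.sum_filter, Finset.sum_const]

lemma sum_sum_inner {ι : Type*} (s : Finset ι) (x : ι → V) :
    ∑ i ∈ s, ∑ j ∈ s, (inner ℝ (x i) (x j) : ℝ) = ‖∑ i ∈ s, x i‖ ^ 2 := by
  rw [← real_inner_self_eq_norm_sq, sum_inner]
  exact Finset.sum_congr rfl fun i _ => (inner_sum _ _ _).symm

lemma sum_powersetCard_normsq {ι : Type*} [Fintype ι] [DecidableEq ι] {r : ℕ}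
    (x : ι → V) (c1 c2 : ℕ)
    (hc1 : ∀ i : ι, ((Finset.powersetCard r (Finset.univ : Finset ι)).filter
          (fun s => i ∈ s)).card = c1)
    (hc2 : ∀ i j : ι, i ≠ j → ((Finset.powersetCard r (Finset.univ : Finset ι)).filter
          (fun s => i ∈ s ∧ j ∈ s)).card = c2) :
    ∑ s ∈ Finset.powersetCard r (Finset.univ : Finset ι), ‖∑ i ∈ s, x i‖ ^ 2
      = (c1 : ℝ) * ∑ i, ‖x i‖ ^ 2 + (c2 : ℝ) * (‖∑ i, x i‖ ^ 2 - ∑ i, ‖x i‖ ^ 2) := by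
  have key : ∀ s ∈ Finset.powersetCard r (Finset.univ : Finset ι),
      ‖∑ i ∈ s, x i‖ ^ 2
        = ∑ i, ∑ j, if i ∈ s ∧ j ∈ s then (inner ℝ (x i) (x j) : ℝ) else 0 := by
    intro s _
    symm
    calc ∑ i, ∑ j, (if i ∈ s ∧ j ∈ s then (inner ℝ (x i) (x j) : ℝ) else 0)
        = ∑ i, (if i ∈ s then ∑ j ∈ s, (inner ℝ (x i) (x j) : ℝ) else 0) := by
          refine Finset.sum_congr rfl fun i _ => ?_
          by_cases hi : i ∈ s
          · simp only [hi, true_and, if_true]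
            rw [Finset.sum_ite_mem, Finset.univ_inter]
          · simp [hi]
      _ = ∑ i ∈ s, ∑ j ∈ s, (inner ℝ (x i) (x j) : ℝ) := by
          rw [Finset.sum_ite_mem, Finset.univ_inter]
      _ = ‖∑ i ∈ s, x i‖ ^ 2 := sum_sum_inner s x
  rw [Finset.sum_congr rfl key, Finset.sum_comm]
  have h2 : ∀ i : ι, ∑ s ∈ Finset.powersetCard r (Finset.univ : Finset ι),
      ∑ j, (if i ∈ s ∧ j ∈ s then (inner ℝ (x i) (x j) : ℝ) else 0)
      = ∑ j, (((Finset.powersetCard r (Finset.univ : Finset ι)).filter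
          (fun s => i ∈ s ∧ j ∈ s)).card : ℝ) * (inner ℝ (x i) (x j) : ℝ) := by
    intro i
    rw [Finset.sum_comm]
    refine Finset.sum_congr rfl fun j _ => ?_
    rw [← Finset.sum_filter, Finset.sum_const, nsmul_eq_mul]
  rw [Finset.sum_congr rfl (fun i _ => h2 i)]
  have h3 : ∀ i : ι, ∑ j, (((Finset.powersetCard r (Finset.univ : Finset ι)).filter
          (fun s => i ∈ s ∧ j ∈ s)).card : ℝ) * (inner ℝ (x i) (x j) : ℝ)
      = (c1 : ℝ) * ‖x i‖ ^ 2
        + (c2 : ℝ) * ((∑ j, (inner ℝ (x i) (x j) : ℝ)) - ‖x i‖ ^ 2) := by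
    intro i
    rw [← Finset.add_sum_erase _ _ (Finset.mem_univ i)]
    have hd : ((Finset.powersetCard r (Finset.univ : Finset ι)).filter
        (fun s => i ∈ s ∧ i ∈ s)).card = c1 := by
      rw [← hc1 i]; congr 1; apply Finset.filter_congr; intro s _; simp
    rw [hd, real_inner_self_eq_norm_sq]
    have ho : ∑ j ∈ Finset.univ.erase i,
        (((Finset.powersetCard r (Finset.univ : Finset ι)).filter
          (fun s => i ∈ s ∧ j ∈ s)).card : ℝ) * (inner ℝ (x i) (x j) : ℝ)
        = (c2 : ℝ) * ∑ j ∈ Finset.univ.erase i, (inner ℝ (x i) (x j) : ℝ) := by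
      rw [Finset.mul_sum]
      refine Finset.sum_congr rfl fun j hj => ?_
      rw [hc2 i j (Ne.symm (Finset.ne_of_mem_erase hj))]
    rw [ho, Finset.sum_erase_eq_sub (Finset.mem_univ i), real_inner_self_eq_norm_sq]
  rw [Finset.sum_congr rfl (fun i _ => h3 i), Finset.sum_add_distrib, ← Finset.mul_sum,
    ← Finset.mul_sum, Finset.sum_sub_distrib, sum_sum_inner]

end S3

section S4

variable {ι : Type*} [Fintype ι] [DecidableEq ι] {δ : ι → Type*} [∀ i, DecidableEq (δ i)]

lemma piFinset_filter_apply_eq (Ω : ∀ i, Finset (δ i)) (k : ι) {s : δ k} (hs : s ∈ Ω k) :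
    (Fintype.piFinset Ω).filter (fun t => t k = s)
      = Fintype.piFinset (Function.update Ω k {s}) := by
  ext t
  simp only [Finset.mem_filter, Fintype.mem_piFinset]
  constructor
  · rintro ⟨h1, h2⟩ i
    by_cases hi : i = k
    · subst hi; simp [h2]
    · simp [Function.update_of_ne hi, h1 i]
  · intro h
    have hk := h k
    simp only [Function.update_self, Finset.mem_singleton] at hk
    refine ⟨fun i => ?_, hk⟩
    by_cases hi : i = k
    · subst hi; simpa [hk] using hs
    · simpa [Function.update_of_ne hi] using h i

lemma sum_piFinset_apply {W : Type*} [AddCommMonoid W] (Ω : ∀ i, Finset (δ i)) (k : ι)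
    (F : δ k → W) :
    ∑ t ∈ Fintype.piFinset Ω, F (t k)
      = (∏ i ∈ Finset.univ.erase k, (Ω i).card) • ∑ s ∈ Ω k, F s := by
  rw [← Finset.sum_fiberwise_of_maps_to (g := fun t => t k) (t := Ω k)
    (fun t ht => Fintype.mem_piFinset.1 ht k)]
  rw [Finset.smul_sum]
  refine Finset.sum_congr rfl fun s hs => ?_
  rw [piFinset_filter_apply_eq Ω k hs]
  have h1 : ∀ t ∈ Fintype.piFinset (Function.update Ω k {s}), F (t k) = F s := by
    intro t ht
    have := Fintype.mem_piFinset.1 ht k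
    simp only [Function.update_self, Finset.mem_singleton] at this
    rw [this]
  rw [Finset.sum_congr rfl h1, Finset.sum_const]
  congr 1
  rw [Fintype.card_piFinset]
  rw [← Finset.prod_erase_mul _ _ (Finset.mem_univ k)]
  simp [Function.update_self]
  refine Finset.prod_congr rfl fun i hi => ?_
  rw [Function.update_of_ne (Finset.ne_of_mem_erase hi)]

lemma sum_piFinset_apply₂ {W : Type*} [AddCommMonoid W] (Ω : ∀ i, Finset (δ i)) {k j : ι}
    (hkj : k ≠ j) (φ : δ k → δ j → W) :
    ∑ t ∈ Fintype.piFinset Ω, φ (t k) (t j)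
      = (∏ i ∈ (Finset.univ.erase k).erase j, (Ω i).card) •
          ∑ s ∈ Ω k, ∑ s' ∈ Ω j, φ s s' := by
  rw [← Finset.sum_fiberwise_of_maps_to (g := fun t => t k) (t := Ω k)
    (fun t ht => Fintype.mem_piFinset.1 ht k)]
  rw [Finset.smul_sum]
  refine Finset.sum_congr rfl fun s hs => ?_
  rw [piFinset_filter_apply_eq Ω k hs]
  have h1 : ∀ t ∈ Fintype.piFinset (Function.update Ω k {s}), φ (t k) (t j) = φ s (t j) := by
    intro t ht
    have := Fintype.mem_piFinset.1 ht k
    simp only [Function.update_self, Finset.mem_singleton] at this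
    rw [this]
  rw [Finset.sum_congr rfl h1, sum_piFinset_apply (Function.update Ω k {s}) j (φ s)]
  rw [Function.update_of_ne (Ne.symm hkj)]
  congr 1
  have hkmem : k ∈ Finset.univ.erase j := Finset.mem_erase.2 ⟨hkj, Finset.mem_univ k⟩
  rw [← Finset.prod_erase_mul _ _ hkmem]
  have : ((Function.update Ω k ({s} : Finset (δ k))) k).card = 1 := by
    simp [Function.update_self]
  rw [this, mul_one]
  rw [Finset.erase_right_comm]
  refine Finset.prod_congr rfl fun i hi => ?_
  have hik : i ≠ k := Finset.ne_of_mem_erase (Finset.mem_of_mem_erase hi)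
  rw [Function.update_of_ne hik]

end S4

section S5




variable {V : Type*} [NormedAddCommGroup V] [InnerProductSpace ℝ V]
variable {ι κ : Type*} [Fintype ι] [DecidableEq ι] [Fintype κ] [DecidableEq κ]

lemma prod_erase_card (e : κ) (r : ℕ) :
    (∏ i ∈ Finset.univ.erase e,
        ((Finset.powersetCard r (Finset.univ : Finset ι)).card))
      = (Fintype.card ι).choose r ^ (Fintype.card κ - 1) := by
  rw [Finset.prod_const, Finset.card_erase_of_mem (Finset.mem_univ e), Finset.card_univ,
    Finset.card_powersetCard, Finset.card_univ]

lemma sum_powersetCard_sum' {r : ℕ} (hr : 1 ≤ r) (x : ι → V) :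
    ∑ s ∈ Finset.powersetCard r (Finset.univ : Finset ι), ∑ i ∈ s, x i
      = ((Fintype.card ι - 1).choose (r - 1)) • ∑ i, x i := by
  rw [sum_powersetCard_sum, Finset.smul_sum]
  refine Finset.sum_congr rfl fun i _ => ?_
  rw [count_mem_powersetCard i hr]

lemma epoch_sum_eq {r : ℕ} (hr : 1 ≤ r) (x : ι → V) :
    ∑ w ∈ Fintype.piFinset (fun _ : κ => Finset.powersetCard r (Finset.univ : Finset ι)),
        ∑ e, ∑ b ∈ w e, x b
      = (Fintype.card κ * ((Fintype.card ι).choose r ^ (Fintype.card κ - 1)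
          * (Fintype.card ι - 1).choose (r - 1))) • ∑ i, x i := by
  rw [Finset.sum_comm]
  have he : ∀ e : κ,
      ∑ w ∈ Fintype.piFinset (fun _ : κ => Finset.powersetCard r (Finset.univ : Finset ι)),
          ∑ b ∈ w e, x b
        = ((Fintype.card ι).choose r ^ (Fintype.card κ - 1)
            * (Fintype.card ι - 1).choose (r - 1)) • ∑ i, x i := by
    intro e
    rw [sum_piFinset_apply (fun _ : κ => Finset.powersetCard r (Finset.univ : Finset ι)) e
      (fun s => ∑ b ∈ s, x b), sum_powersetCard_sum' hr, prod_erase_card e r, smul_smul]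
  rw [Finset.sum_congr rfl (fun e _ => he e), Finset.sum_const, smul_smul, Finset.card_univ]

end S5

section S6



variable {V : Type*} [NormedAddCommGroup V] [InnerProductSpace ℝ V]
variable {ι κ : Type*} [Fintype ι] [DecidableEq ι] [Fintype κ] [DecidableEq κ]

lemma normsq_smul (a : ℝ) (y : V) : ‖a • y‖ ^ 2 = a ^ 2 * ‖y‖ ^ 2 := by
  rw [norm_smul, mul_pow, Real.norm_eq_abs, sq_abs]

lemma sum_eq_card_smul_mean {x : ι → V} (hn : (Fintype.card ι : ℝ) ≠ 0) :
    ∑ i, x i = (Fintype.card ι : ℝ) • ((Fintype.card ι : ℝ)⁻¹ • ∑ i, x i) := by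
  rw [smul_smul, mul_inv_cancel₀ hn, one_smul]

lemma sum_normsq_sub_mean (x : ι → V) (hn : (Fintype.card ι : ℝ) ≠ 0) :
    ∑ i, ‖x i - (Fintype.card ι : ℝ)⁻¹ • ∑ j, x j‖ ^ 2
      = ∑ i, ‖x i‖ ^ 2
        - (Fintype.card ι : ℝ) * ‖(Fintype.card ι : ℝ)⁻¹ • ∑ j, x j‖ ^ 2 := by
  set xb := (Fintype.card ι : ℝ)⁻¹ • ∑ j, x j with hxb
  have h1 : ∀ i, ‖x i - xb‖ ^ 2 = ‖x i‖ ^ 2 - 2 * (inner ℝ (x i) xb : ℝ) + ‖xb‖ ^ 2 :=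
    fun i => norm_sub_sq_real _ _
  rw [Finset.sum_congr rfl fun i _ => h1 i, Finset.sum_add_distrib, Finset.sum_sub_distrib,
    Finset.sum_const, Finset.card_univ, ← Finset.mul_sum, ← sum_inner,
    sum_eq_card_smul_mean hn (x := x), ← hxb, real_inner_smul_left,
    real_inner_self_eq_norm_sq, nsmul_eq_mul]
  ring

lemma normsq_sum_eq (x : ι → V) (hn : (Fintype.card ι : ℝ) ≠ 0) :
    ‖∑ i, x i‖ ^ 2
      = (Fintype.card ι : ℝ) ^ 2 * ‖(Fintype.card ι : ℝ)⁻¹ • ∑ j, x j‖ ^ 2 := by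
  conv_lhs => rw [sum_eq_card_smul_mean hn]
  rw [normsq_smul]

lemma pow_sub_one_mul' {C : ℝ} {c : ℕ} (hc : 1 ≤ c) : C ^ (c - 1) * C = C ^ c := by
  conv_rhs => rw [← Nat.sub_add_cancel hc]
  rw [pow_succ]

lemma aux_pow {C : ℝ} {c : ℕ} (hc : 1 ≤ c) :
    ((c - 1 : ℕ) : ℝ) * C ^ (c - 2) * C ^ 2 = ((c : ℝ) - 1) * C ^ c := by
  obtain ⟨c', rfl⟩ : ∃ c', c = c' + 1 := ⟨c - 1, by omega⟩
  rcases c' with _ | c''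
  · simp
  · have h : c'' + 1 + 1 - 2 = c'' := by omega
    have h2 : c'' + 1 + 1 - 1 = c'' + 1 := by omega
    rw [h, h2]
    push_cast
    rw [pow_succ, pow_succ]
    ring

lemma epoch_normsq {r : ℕ} (hn2 : 2 ≤ Fintype.card ι) (hr1 : 1 ≤ r)
    (hrn : r ≤ Fintype.card ι) (hc : 1 ≤ Fintype.card κ) (x : ι → V) :
    ∑ w ∈ Fintype.piFinset (fun _ : κ => Finset.powersetCard r (Finset.univ : Finset ι)),
        ‖((Fintype.card κ : ℝ) * (r : ℝ))⁻¹ • ∑ e, ∑ b ∈ w e, x b‖ ^ 2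
      = ((Fintype.card ι).choose r : ℝ) ^ Fintype.card κ *
          (‖(Fintype.card ι : ℝ)⁻¹ • ∑ i, x i‖ ^ 2
            + ((Fintype.card ι : ℝ) - (r : ℝ)) /
                (((Fintype.card ι : ℝ) - 1) * (r : ℝ) * (Fintype.card κ : ℝ))
              * ((Fintype.card ι : ℝ)⁻¹ *
                  ∑ i, ‖x i - (Fintype.card ι : ℝ)⁻¹ • ∑ j, x j‖ ^ 2)) := by
  classical
  set n := Fintype.card ι with hn
  set c := Fintype.card κ with hcdef
  set C := n.choose r with hCdef
  have hnR : (n : ℝ) ≠ 0 := by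
    have : 0 < n := by omega
    exact_mod_cast this.ne'
  have hn1R : (n : ℝ) - 1 ≠ 0 := by
    have : (2 : ℝ) ≤ (n : ℝ) := by exact_mod_cast hn2
    linarith
  have hrR : (r : ℝ) ≠ 0 := by
    have : 0 < r := hr1
    exact_mod_cast this.ne'
  have hcR : (c : ℝ) ≠ 0 := by
    have : 0 < c := hc
    exact_mod_cast this.ne'
  have hCR : (C : ℝ) ≠ 0 := by
    have : 0 < C := Nat.choose_pos hrn
    exact_mod_cast this.ne'
  set a1 := (n - 1).choose (r - 1) with ha1def
  set a2 := if 2 ≤ r then (n - 2).choose (r - 2) else 0 with ha2def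
  have hcnt1 : ∀ i : ι, ((Finset.powersetCard r (Finset.univ : Finset ι)).filter
      (fun s => i ∈ s)).card = a1 := fun i => count_mem_powersetCard i hr1
  have hcnt2 : ∀ i j : ι, i ≠ j → ((Finset.powersetCard r (Finset.univ : Finset ι)).filter
      (fun s => i ∈ s ∧ j ∈ s)).card = a2 := by
    intro i j hij
    by_cases h2 : 2 ≤ r
    · rw [ha2def, if_pos h2]
      exact count_pair_powersetCard hij h2
    · have hre : r = 1 := by omega
      subst hre
      rw [ha2def, if_neg h2]
      exact count_pair_powersetCard_one hij
  have f1 : (a1 : ℝ) * (n : ℝ) = (C : ℝ) * (r : ℝ) := by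
    exact_mod_cast choose_id1 (n := n) hr1
  have f2 : (a2 : ℝ) * ((n : ℝ) * ((n : ℝ) - 1)) = (C : ℝ) * ((r : ℝ) * ((r : ℝ) - 1)) := by
    by_cases h2 : 2 ≤ r
    · rw [ha2def, if_pos h2]
      have hnat := choose_id2 h2 hn2
      have hcast := congrArg (fun m : ℕ => (m : ℝ)) hnat
      push_cast [Nat.cast_sub (show 1 ≤ n by omega), Nat.cast_sub (show 1 ≤ r by omega)] at hcast
      exact_mod_cast hcast
    · have hre : r = 1 := by omega
      subst hre
      rw [ha2def, if_neg h2]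
      simp
  have step0 : ∑ w ∈ Fintype.piFinset (fun _ : κ => Finset.powersetCard r (Finset.univ : Finset ι)),
        ‖((c : ℝ) * (r : ℝ))⁻¹ • ∑ e, ∑ b ∈ w e, x b‖ ^ 2
      = ((c : ℝ) * (r : ℝ))⁻¹ ^ 2 *
          ∑ w ∈ Fintype.piFinset (fun _ : κ => Finset.powersetCard r (Finset.univ : Finset ι)),
            ‖∑ e, ∑ b ∈ w e, x b‖ ^ 2 := by
    rw [Finset.mul_sum]
    exact Finset.sum_congr rfl fun w _ => normsq_smul _ _
  rw [step0]
  have step1 : ∑ w ∈ Fintype.piFinset (fun _ : κ => Finset.powersetCard r (Finset.univ : Finset ι)),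
        ‖∑ e, ∑ b ∈ w e, x b‖ ^ 2
      = (∑ w ∈ Fintype.piFinset (fun _ : κ => Finset.powersetCard r (Finset.univ : Finset ι)),
            ∑ e, ‖∑ b ∈ w e, x b‖ ^ 2)
        + ∑ w ∈ Fintype.piFinset (fun _ : κ => Finset.powersetCard r (Finset.univ : Finset ι)),
            ∑ e, ∑ e' ∈ Finset.univ.erase e,
              (inner ℝ (∑ b ∈ w e, x b) (∑ b ∈ w e', x b) : ℝ) := by
    rw [← Finset.sum_add_distrib]
    refine Finset.sum_congr rfl fun w _ => ?_
    rw [← sum_sum_inner (Finset.univ : Finset κ) (fun e => ∑ b ∈ w e, x b),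
      ← Finset.sum_add_distrib]
    refine Finset.sum_congr rfl fun e _ => ?_
    rw [← Finset.add_sum_erase _ _ (Finset.mem_univ e), real_inner_self_eq_norm_sq]
  rw [step1]
  have hA : ∑ w ∈ Fintype.piFinset (fun _ : κ => Finset.powersetCard r (Finset.univ : Finset ι)),
        ∑ e, ‖∑ b ∈ w e, x b‖ ^ 2
      = (c : ℝ) * (C : ℝ) ^ (c - 1) *
          ((a1 : ℝ) * ∑ i, ‖x i‖ ^ 2
            + (a2 : ℝ) * (‖∑ i, x i‖ ^ 2 - ∑ i, ‖x i‖ ^ 2)) := by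
    rw [Finset.sum_comm]
    have he : ∀ e : κ,
        ∑ w ∈ Fintype.piFinset (fun _ : κ => Finset.powersetCard r (Finset.univ : Finset ι)),
            ‖∑ b ∈ w e, x b‖ ^ 2
          = (C : ℝ) ^ (c - 1) *
              ((a1 : ℝ) * ∑ i, ‖x i‖ ^ 2
                + (a2 : ℝ) * (‖∑ i, x i‖ ^ 2 - ∑ i, ‖x i‖ ^ 2)) := by
      intro e
      rw [sum_piFinset_apply (fun _ : κ => Finset.powersetCard r (Finset.univ : Finset ι)) e
        (fun s => ‖∑ b ∈ s, x b‖ ^ 2)]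
      rw [sum_powersetCard_normsq x a1 a2 hcnt1 hcnt2, prod_erase_card e r, nsmul_eq_mul]
      push_cast
      ring
    rw [Finset.sum_congr rfl fun e _ => he e, Finset.sum_const, Finset.card_univ, nsmul_eq_mul]
    ring
  have hB : ∑ w ∈ Fintype.piFinset (fun _ : κ => Finset.powersetCard r (Finset.univ : Finset ι)),
        ∑ e, ∑ e' ∈ Finset.univ.erase e,
          (inner ℝ (∑ b ∈ w e, x b) (∑ b ∈ w e', x b) : ℝ)
      = (c : ℝ) * ((c - 1 : ℕ) : ℝ) * ((C : ℝ) ^ (c - 2) * ((a1 : ℝ) ^ 2 * ‖∑ i, x i‖ ^ 2)) := by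
    rw [Finset.sum_comm]
    have he : ∀ e : κ,
        ∑ w ∈ Fintype.piFinset (fun _ : κ => Finset.powersetCard r (Finset.univ : Finset ι)),
            ∑ e' ∈ Finset.univ.erase e, (inner ℝ (∑ b ∈ w e, x b) (∑ b ∈ w e', x b) : ℝ)
          = ((c - 1 : ℕ) : ℝ) * ((C : ℝ) ^ (c - 2) * ((a1 : ℝ) ^ 2 * ‖∑ i, x i‖ ^ 2)) := by
      intro e
      rw [Finset.sum_comm]
      have he' : ∀ e' ∈ Finset.univ.erase e,
          ∑ w ∈ Fintype.piFinset (fun _ : κ => Finset.powersetCard r (Finset.univ : Finset ι)),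
              (inner ℝ (∑ b ∈ w e, x b) (∑ b ∈ w e', x b) : ℝ)
            = (C : ℝ) ^ (c - 2) * ((a1 : ℝ) ^ 2 * ‖∑ i, x i‖ ^ 2) := by
        intro e' he'
        have hee' : e ≠ e' := fun h => (Finset.ne_of_mem_erase he') h.symm
        rw [sum_piFinset_apply₂ (fun _ : κ => Finset.powersetCard r (Finset.univ : Finset ι))
          hee' (fun s s' => (inner ℝ (∑ b ∈ s, x b) (∑ b ∈ s', x b) : ℝ))]
        rw [sum_sum_inner (Finset.powersetCard r (Finset.univ : Finset ι)) (fun s => ∑ b ∈ s, x b)]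
        have hnorm : ‖((n - 1).choose (r - 1) • ∑ i, x i : V)‖ ^ 2
            = (a1 : ℝ) ^ 2 * ‖∑ i, x i‖ ^ 2 := by
          rw [← Nat.cast_smul_eq_nsmul ℝ, normsq_smul]
        rw [sum_powersetCard_sum' hr1 x, hnorm, Finset.prod_const, Finset.card_powersetCard,
          Finset.card_erase_of_mem he', Finset.card_erase_of_mem (Finset.mem_univ e)]
        simp only [Finset.card_univ, ← hn, ← hCdef, ← hcdef]
        have h12 : c - 1 - 1 = c - 2 := by omega
        rw [h12, nsmul_eq_mul]
        push_cast
        ring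
      rw [Finset.sum_congr rfl he', Finset.sum_const, Finset.card_erase_of_mem (Finset.mem_univ e),
        Finset.card_univ, nsmul_eq_mul]
    rw [Finset.sum_congr rfl fun e _ => he e, Finset.sum_const, Finset.card_univ, nsmul_eq_mul]
    ring
  rw [hA, hB]
  rw [sum_normsq_sub_mean x hnR, normsq_sum_eq x hnR]
  have hpow1 : (C : ℝ) ^ (c - 1) * (C : ℝ) = (C : ℝ) ^ c := pow_sub_one_mul' hc
  have h4 : ((c - 1 : ℕ) : ℝ) * (C : ℝ) ^ (c - 2) * (C : ℝ) ^ 2 = ((c : ℝ) - 1) * (C : ℝ) ^ c :=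
    aux_pow hc
  have ha1R : (a1 : ℝ) = (C : ℝ) * (r : ℝ) / (n : ℝ) := by
    rw [eq_div_iff hnR]
    exact f1
  have ha2R : (a2 : ℝ) = (C : ℝ) * ((r : ℝ) * ((r : ℝ) - 1)) / ((n : ℝ) * ((n : ℝ) - 1)) := by
    rw [eq_div_iff (by exact mul_ne_zero hnR hn1R)]
    exact f2
  have hGR : ((c - 1 : ℕ) : ℝ) * (C : ℝ) ^ (c - 2)
      = ((c : ℝ) - 1) * (C : ℝ) ^ (c - 1) / (C : ℝ) := by
    rw [eq_div_iff hCR]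
    apply mul_right_cancel₀ hCR
    linear_combination h4 - ((c : ℝ) - 1) * hpow1
  rw [ha1R, ha2R]
  rw [show (c : ℝ) * ((c - 1 : ℕ) : ℝ) * ((C : ℝ) ^ (c - 2) *
      (((C : ℝ) * (r : ℝ) / (n : ℝ)) ^ 2 * ((n : ℝ) ^ 2 * ‖(n : ℝ)⁻¹ • ∑ j, x j‖ ^ 2)))
      = (c : ℝ) * (((c - 1 : ℕ) : ℝ) * (C : ℝ) ^ (c - 2)) *
      (((C : ℝ) * (r : ℝ) / (n : ℝ)) ^ 2 * ((n : ℝ) ^ 2 * ‖(n : ℝ)⁻¹ • ∑ j, x j‖ ^ 2)) by ring]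
  rw [hGR, ← hpow1]
  have hsum_eq : ∑ i, ‖x i - (n : ℝ)⁻¹ • ∑ j, x j‖ ^ 2
      = ∑ i, ‖x i‖ ^ 2 - (n : ℝ) * ‖(n : ℝ)⁻¹ • ∑ j, x j‖ ^ 2 := sum_normsq_sub_mean x hnR
  set P := ‖(n : ℝ)⁻¹ • ∑ j, x j‖ ^ 2 with hP
  set Q := ∑ i, ‖x i‖ ^ 2 with hQ
  field_simp
  ring

end S6

section S7


variable {V : Type*} [NormedAddCommGroup V] [InnerProductSpace ℝ V]
variable {ι κ : Type*} [Fintype ι] [DecidableEq ι] [Fintype κ] [DecidableEq κ]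

lemma epoch_mean_real {r : ℕ} (hr1 : 1 ≤ r) (hrn : r ≤ Fintype.card ι)
    (hn1 : 1 ≤ Fintype.card ι) (hc : 1 ≤ Fintype.card κ) (x : ι → V) :
    ∑ w ∈ Fintype.piFinset (fun _ : κ => Finset.powersetCard r (Finset.univ : Finset ι)),
        ((Fintype.card κ : ℝ) * (r : ℝ))⁻¹ • ∑ e, ∑ b ∈ w e, x b
      = (((Fintype.card ι).choose r : ℝ) ^ Fintype.card κ) •
          ((Fintype.card ι : ℝ)⁻¹ • ∑ i, x i) := by
  have hnR : (Fintype.card ι : ℝ) ≠ 0 := by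
    have : 0 < Fintype.card ι := hn1
    exact_mod_cast this.ne'
  have hrR : (r : ℝ) ≠ 0 := by
    have : 0 < r := hr1
    exact_mod_cast this.ne'
  have hcR : (Fintype.card κ : ℝ) ≠ 0 := by
    have : 0 < Fintype.card κ := hc
    exact_mod_cast this.ne'
  have hCR : ((Fintype.card ι).choose r : ℝ) ≠ 0 := by
    have : 0 < (Fintype.card ι).choose r := Nat.choose_pos hrn
    exact_mod_cast this.ne'
  have f1 : (((Fintype.card ι - 1).choose (r - 1) : ℕ) : ℝ) * (Fintype.card ι : ℝ)
      = ((Fintype.card ι).choose r : ℝ) * (r : ℝ) := by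
    exact_mod_cast choose_id1 (n := Fintype.card ι) hr1
  rw [← Finset.smul_sum, epoch_sum_eq hr1 x, ← Nat.cast_smul_eq_nsmul ℝ, smul_smul, smul_smul]
  congr 1
  have ha1R : (((Fintype.card ι - 1).choose (r - 1) : ℕ) : ℝ)
      = ((Fintype.card ι).choose r : ℝ) * (r : ℝ) / (Fintype.card ι : ℝ) := by
    rw [eq_div_iff hnR]; exact f1
  have hpow : ((Fintype.card ι).choose r : ℝ) ^ (Fintype.card κ - 1)
        * ((Fintype.card ι).choose r : ℝ)
      = ((Fintype.card ι).choose r : ℝ) ^ Fintype.card κ := pow_sub_one_mul' hc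
  push_cast
  rw [ha1R, ← hpow]
  field_simp

end S7

section S8
section AgentLevel
variable {V : Type*} [NormedAddCommGroup V] [InnerProductSpace ℝ V] {K : ℕ}

/-- batch-tuple space of agent `k` -/
def Omg (K : ℕ) (N E B : Fin K → ℕ) (k : Fin K) : Finset (Fin (E k) → Finset (Fin (N k))) :=
  Fintype.piFinset (fun _ => Finset.powersetCard (B k) Finset.univ)

noncomputable def mAvg (N E B : Fin K → ℕ) (g : (k : Fin K) → Fin (N k) → V) (k : Fin K)
    (w : Fin (E k) → Finset (Fin (N k))) : V :=
  ((E k : ℝ) * (B k : ℝ))⁻¹ • ∑ e, ∑ b ∈ w e, g k b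

noncomputable def aMean (N : Fin K → ℕ) (g : (k : Fin K) → Fin (N k) → V) (k : Fin K) : V :=
  (N k : ℝ)⁻¹ • ∑ n, g k n

noncomputable def tauS (N E B : Fin K → ℕ) (k : Fin K) : ℝ :=
  ((N k : ℝ) - (B k : ℝ)) / (((N k : ℝ) - 1) * (B k : ℝ) * (E k : ℝ))

noncomputable def vVar (N : Fin K → ℕ) (g : (k : Fin K) → Fin (N k) → V) (k : Fin K) : ℝ :=
  (N k : ℝ)⁻¹ * ∑ n, ‖g k n - aMean N g k‖ ^ 2

lemma mAvg_fold (N E B : Fin K → ℕ) (g : (k : Fin K) → Fin (N k) → V) (k : Fin K)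
    (w : Fin (E k) → Finset (Fin (N k))) :
    ((E k : ℝ) * (B k : ℝ))⁻¹ • ∑ e, ∑ b ∈ w e, g k b = mAvg N E B g k w := rfl

lemma aMean_fold (N : Fin K → ℕ) (g : (k : Fin K) → Fin (N k) → V) (k : Fin K) :
    (N k : ℝ)⁻¹ • ∑ n, g k n = aMean N g k := rfl

lemma tauS_fold (N E B : Fin K → ℕ) (k : Fin K) :
    ((N k : ℝ) - (B k : ℝ)) / (((N k : ℝ) - 1) * (B k : ℝ) * (E k : ℝ)) = tauS N E B k := rfl

lemma vVar_fold (N : Fin K → ℕ) (g : (k : Fin K) → Fin (N k) → V) (k : Fin K) :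
    (N k : ℝ)⁻¹ * ∑ n, ‖g k n - aMean N g k‖ ^ 2 = vVar N g k := rfl

lemma Omg_card (N E B : Fin K → ℕ) (k : Fin K) (hBN : B k ≤ N k) :
    ((Omg K N E B k).card : ℝ) = ((N k).choose (B k) : ℝ) ^ E k := by
  rw [Omg, Fintype.card_piFinset]
  push_cast
  rw [Finset.prod_const, Finset.card_powersetCard, Finset.card_univ, Finset.card_univ,
    Fintype.card_fin, Fintype.card_fin]

lemma agent_mean (N E B : Fin K → ℕ) (g : (k : Fin K) → Fin (N k) → V) (k : Fin K)
    (hN : 2 ≤ N k) (hE : 1 ≤ E k) (hB1 : 1 ≤ B k) (hBN : B k ≤ N k) :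
    ∑ w ∈ Omg K N E B k, mAvg N E B g k w
      = (((N k).choose (B k) : ℝ) ^ E k) • aMean N g k := by
  have h := epoch_mean_real (ι := Fin (N k)) (κ := Fin (E k)) (r := B k)
    hB1 (by simpa using hBN) (by simp; omega) (by simpa using hE) (g k)
  simp only [Fintype.card_fin] at h
  exact h

lemma agent_sq (N E B : Fin K → ℕ) (g : (k : Fin K) → Fin (N k) → V) (k : Fin K)
    (hN : 2 ≤ N k) (hE : 1 ≤ E k) (hB1 : 1 ≤ B k) (hBN : B k ≤ N k) :
    ∑ w ∈ Omg K N E B k, ‖mAvg N E B g k w‖ ^ 2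
      = (((N k).choose (B k) : ℝ) ^ E k)
          * (‖aMean N g k‖ ^ 2 + tauS N E B k * vVar N g k) := by
  have h := epoch_normsq (ι := Fin (N k)) (κ := Fin (E k)) (r := B k)
    (by simpa using hN) hB1 (by simpa using hBN) (by simpa using hE) (g k)
  simp only [Fintype.card_fin] at h
  exact h

end AgentLevel

end S8

section S9

/-- The finset of all assignments, to each agent `k`, of a tuple of `E k` mini-batches,
each a `B k`-element subset of `{1,…,N k}`. -/
def allBatchTuples (K : ℕ) (N E B : Fin K → ℕ) :
    Finset ((k : Fin K) → Fin (E k) → Finset (Fin (N k))) :=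
  Finset.univ.filter fun t => ∀ k e, (t k e).card = B k

lemma allBatchTuples_eq (K : ℕ) (N E B : Fin K → ℕ) :
    allBatchTuples K N E B = Fintype.piFinset (Omg K N E B) := by
  ext t
  simp [allBatchTuples, Omg, Fintype.mem_piFinset, Finset.mem_powersetCard_univ]


/-- two-level variance decomposition of the gradient noise: the two-level
average — uniform over agent subsets `S` of cardinality `L` and, independently for each `k`,
uniform over the tuples of `E k` batches of size `B k` from `{1,…,N k}` — of
`‖(1/L) ∑_{ℓ∈S} m_ℓ − ā‖²`, where `m_ℓ` is the `E_ℓ`-epoch mini-batch mean of `g_ℓ`,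
equals the agent-sampling (model-variability) term plus the mini-batch (data-variability)
term with factors `(K−L)/(L(K−1))` and `τ_{s,k} = (N_k − B_k)/((N_k−1) B_k E_k)`. -/
theorem gradient_noise_variance_decomposition {M K L : ℕ} (hK : 2 ≤ K) (hL1 : 1 ≤ L)
    (hLK : L ≤ K) (N E B : Fin K → ℕ) (hN : ∀ k, 2 ≤ N k) (hE : ∀ k, 1 ≤ E k)
    (hB1 : ∀ k, 1 ≤ B k) (hBN : ∀ k, B k ≤ N k)
    (g : (k : Fin K) → Fin (N k) → EuclideanSpace ℝ (Fin M)) :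
    ((K.choose L : ℝ))⁻¹ * (((allBatchTuples K N E B).card : ℝ))⁻¹ *
        ∑ S ∈ Finset.powersetCard L (Finset.univ : Finset (Fin K)),
          ∑ t ∈ allBatchTuples K N E B,
            ‖(L : ℝ)⁻¹ • (∑ ℓ ∈ S, ((E ℓ : ℝ) * (B ℓ : ℝ))⁻¹ • ∑ e, ∑ b ∈ t ℓ e, g ℓ b)
              - (K : ℝ)⁻¹ • ∑ k, (N k : ℝ)⁻¹ • ∑ n, g k n‖ ^ 2
      = ((K : ℝ) - (L : ℝ)) / ((L : ℝ) * ((K : ℝ) - 1)) *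
          ((K : ℝ)⁻¹ * ∑ k,
            ‖(N k : ℝ)⁻¹ • (∑ n, g k n) - (K : ℝ)⁻¹ • ∑ j, (N j : ℝ)⁻¹ • ∑ n, g j n‖ ^ 2)
        + ((K : ℝ) * (L : ℝ))⁻¹ *
            ∑ k, ((N k : ℝ) - (B k : ℝ)) / (((N k : ℝ) - 1) * (B k : ℝ) * (E k : ℝ)) *
              ((N k : ℝ)⁻¹ * ∑ n, ‖g k n - (N k : ℝ)⁻¹ • ∑ m, g k m‖ ^ 2) := by
  classical
  -- nonzero facts
  have hKR : (K : ℝ) ≠ 0 := by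
    have : 0 < K := by omega
    exact_mod_cast this.ne'
  have hLR : (L : ℝ) ≠ 0 := by
    have : 0 < L := hL1
    exact_mod_cast this.ne'
  have hK1ne : (K : ℝ) - 1 ≠ 0 := by
    have : (2 : ℝ) ≤ (K : ℝ) := by exact_mod_cast hK
    linarith
  have hCKL : ((K.choose L : ℕ) : ℝ) ≠ 0 := by
    have : 0 < K.choose L := Nat.choose_pos hLK
    exact_mod_cast this.ne'
  have hTkR : ∀ k, ((N k).choose (B k) : ℝ) ^ E k ≠ 0 := by
    intro k
    apply pow_ne_zero
    have : 0 < (N k).choose (B k) := Nat.choose_pos (hBN k)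
    exact_mod_cast this.ne'
  have hTR : (∏ j, ((N j).choose (B j) : ℝ) ^ E j) ≠ 0 :=
    Finset.prod_ne_zero_iff.2 fun j _ => hTkR j
  -- rewrite to structured form
  rw [allBatchTuples_eq]
  simp only [aMean_fold, mAvg_fold, tauS_fold, vVar_fold]
  have hcard : ((Fintype.piFinset (Omg K N E B)).card : ℝ)
      = ∏ j, ((N j).choose (B j) : ℝ) ^ E j := by
    rw [Fintype.card_piFinset]
    push_cast
    exact Finset.prod_congr rfl fun k _ => Omg_card N E B k (hBN k)
  rw [hcard]
  set aB := (K : ℝ)⁻¹ • ∑ k, aMean N g k with haB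
  -- agent facts
  have hMean : ∀ k, ∑ w ∈ Omg K N E B k, mAvg N E B g k w
      = (((N k).choose (B k) : ℝ) ^ E k) • aMean N g k :=
    fun k => agent_mean N E B g k (hN k) (hE k) (hB1 k) (hBN k)
  have hSq : ∀ k, ∑ w ∈ Omg K N E B k, ‖mAvg N E B g k w‖ ^ 2
      = (((N k).choose (B k) : ℝ) ^ E k)
          * (‖aMean N g k‖ ^ 2 + tauS N E B k * vVar N g k) :=
    fun k => agent_sq N E B g k (hN k) (hE k) (hB1 k) (hBN k)
  -- counting facts at agent-subset level
  set K1 := (K - 1).choose (L - 1) with hK1def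
  set K2 := if 2 ≤ L then (K - 2).choose (L - 2) else 0 with hK2def
  have hK1 : ∀ i : Fin K, ((Finset.powersetCard L (Finset.univ : Finset (Fin K))).filter
      (fun s => i ∈ s)).card = K1 := by
    intro i
    have := count_mem_powersetCard i hL1
    simpa using this
  have hK2 : ∀ i j : Fin K, i ≠ j →
      ((Finset.powersetCard L (Finset.univ : Finset (Fin K))).filter
        (fun s => i ∈ s ∧ j ∈ s)).card = K2 := by
    intro i j hij
    by_cases h2 : 2 ≤ L
    · rw [hK2def, if_pos h2]
      have := count_pair_powersetCard hij h2
      simpa using this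
    · have hLe : L = 1 := by omega
      subst hLe
      rw [hK2def, if_neg h2]
      exact count_pair_powersetCard_one hij
  have fK1 : (K1 : ℝ) * (K : ℝ) = (K.choose L : ℝ) * (L : ℝ) := by
    exact_mod_cast choose_id1 (n := K) hL1
  have fK2 : (K2 : ℝ) * ((K : ℝ) * ((K : ℝ) - 1))
      = (K.choose L : ℝ) * ((L : ℝ) * ((L : ℝ) - 1)) := by
    by_cases h2 : 2 ≤ L
    · rw [hK2def, if_pos h2]
      have hnat := choose_id2 h2 hK
      have hcast := congrArg (fun m : ℕ => (m : ℝ)) hnat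
      push_cast [Nat.cast_sub (show 1 ≤ K by omega), Nat.cast_sub (show 1 ≤ L by omega)] at hcast
      exact_mod_cast hcast
    · have hLe : L = 1 := by omega
      subst hLe
      rw [hK2def, if_neg h2]
      simp
  -- vector facts about the overall mean
  have hsumA : ∑ k, aMean N g k = (K : ℝ) • aB := by
    rw [haB, smul_smul, mul_inv_cancel₀ hKR, one_smul]
  have hIP : (inner ℝ (∑ k, aMean N g k) aB : ℝ) = (K : ℝ) * ‖aB‖ ^ 2 := by
    rw [hsumA, real_inner_smul_left, real_inner_self_eq_norm_sq]
  have hnormsumA : ‖∑ k, aMean N g k‖ ^ 2 = (K : ℝ) ^ 2 * ‖aB‖ ^ 2 := by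
    rw [hsumA, normsq_smul]
  have hvarA : ∑ k, ‖aMean N g k - aB‖ ^ 2
      = (∑ k, ‖aMean N g k‖ ^ 2) - (K : ℝ) * ‖aB‖ ^ 2 := by
    have h := sum_normsq_sub_mean (ι := Fin K) (aMean N g) (by simpa using hKR)
    simp only [Fintype.card_fin] at h
    rw [← haB] at h
    exact h
  -- product cast facts
  have hprodE : ∀ k : Fin K, ((∏ i ∈ Finset.univ.erase k, (Omg K N E B i).card : ℕ) : ℝ)
      = ∏ i ∈ Finset.univ.erase k, ((N i).choose (B i) : ℝ) ^ E i := by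
    intro k
    push_cast
    exact Finset.prod_congr rfl fun i _ => Omg_card N E B i (hBN i)
  have hprodE2 : ∀ (k j : Fin K),
      ((∏ i ∈ (Finset.univ.erase k).erase j, (Omg K N E B i).card : ℕ) : ℝ)
      = ∏ i ∈ (Finset.univ.erase k).erase j, ((N i).choose (B i) : ℝ) ^ E i := by
    intro k j
    push_cast
    exact Finset.prod_congr rfl fun i _ => Omg_card N E B i (hBN i)
  -- t-level facts
  have hDk : ∀ k : Fin K, ∑ t ∈ Fintype.piFinset (Omg K N E B), ‖mAvg N E B g k (t k)‖ ^ 2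
      = (∏ j, ((N j).choose (B j) : ℝ) ^ E j)
          * (‖aMean N g k‖ ^ 2 + tauS N E B k * vVar N g k) := by
    intro k
    rw [sum_piFinset_apply (Omg K N E B) k (fun w => ‖mAvg N E B g k w‖ ^ 2), hSq k,
      nsmul_eq_mul, hprodE k, ← Finset.prod_erase_mul Finset.univ _ (Finset.mem_univ k)]
    ring
  have hD : ∑ t ∈ Fintype.piFinset (Omg K N E B), ∑ k, ‖mAvg N E B g k (t k)‖ ^ 2
      = (∏ j, ((N j).choose (B j) : ℝ) ^ E j)
          * ∑ k, (‖aMean N g k‖ ^ 2 + tauS N E B k * vVar N g k) := by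
    rw [Finset.sum_comm, Finset.sum_congr rfl fun k _ => hDk k, ← Finset.mul_sum]
  have hIk : ∀ k : Fin K,
      ∑ t ∈ Fintype.piFinset (Omg K N E B), (inner ℝ (mAvg N E B g k (t k)) aB : ℝ)
      = (∏ j, ((N j).choose (B j) : ℝ) ^ E j) * (inner ℝ (aMean N g k) aB : ℝ) := by
    intro k
    rw [sum_piFinset_apply (Omg K N E B) k (fun w => (inner ℝ (mAvg N E B g k w) aB : ℝ)),
      ← sum_inner, hMean k, real_inner_smul_left, nsmul_eq_mul, hprodE k,
      ← Finset.prod_erase_mul Finset.univ _ (Finset.mem_univ k)]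
    ring
  have hOkj : ∀ k j : Fin K, k ≠ j →
      ∑ t ∈ Fintype.piFinset (Omg K N E B),
        (inner ℝ (mAvg N E B g k (t k)) (mAvg N E B g j (t j)) : ℝ)
      = (∏ i, ((N i).choose (B i) : ℝ) ^ E i) * (inner ℝ (aMean N g k) (aMean N g j) : ℝ) := by
    intro k j hkj
    rw [sum_piFinset_apply₂ (Omg K N E B) hkj
      (fun w w' => (inner ℝ (mAvg N E B g k w) (mAvg N E B g j w') : ℝ))]
    have hinner : ∑ w ∈ Omg K N E B k, ∑ w' ∈ Omg K N E B j,
        (inner ℝ (mAvg N E B g k w) (mAvg N E B g j w') : ℝ)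
        = inner ℝ (∑ w ∈ Omg K N E B k, mAvg N E B g k w)
            (∑ w' ∈ Omg K N E B j, mAvg N E B g j w') := by
      rw [sum_inner]
      exact Finset.sum_congr rfl fun w _ => (inner_sum _ _ _).symm
    have hjmem : j ∈ Finset.univ.erase k := Finset.mem_erase.2 ⟨hkj.symm, Finset.mem_univ j⟩
    rw [hinner, hMean k, hMean j, real_inner_smul_left, real_inner_smul_right, nsmul_eq_mul,
      hprodE2 k j, ← Finset.prod_erase_mul Finset.univ _ (Finset.mem_univ k),
      ← Finset.prod_erase_mul _ _ hjmem]
    ring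
  have hG : ∑ t ∈ Fintype.piFinset (Omg K N E B), ‖∑ k, mAvg N E B g k (t k)‖ ^ 2
      = (∏ j, ((N j).choose (B j) : ℝ) ^ E j)
            * ∑ k, (‖aMean N g k‖ ^ 2 + tauS N E B k * vVar N g k)
        + (∏ j, ((N j).choose (B j) : ℝ) ^ E j)
            * ((K : ℝ) ^ 2 * ‖aB‖ ^ 2 - ∑ k, ‖aMean N g k‖ ^ 2) := by
    have hpt : ∀ t : (k : Fin K) → Fin (E k) → Finset (Fin (N k)),
        ‖∑ k, mAvg N E B g k (t k)‖ ^ 2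
          = ∑ k, ‖mAvg N E B g k (t k)‖ ^ 2
            + ∑ k, ∑ j ∈ Finset.univ.erase k,
                (inner ℝ (mAvg N E B g k (t k)) (mAvg N E B g j (t j)) : ℝ) := by
      intro t
      rw [← sum_sum_inner Finset.univ (fun k => mAvg N E B g k (t k)), ← Finset.sum_add_distrib]
      refine Finset.sum_congr rfl fun k _ => ?_
      rw [← Finset.add_sum_erase _ _ (Finset.mem_univ k), real_inner_self_eq_norm_sq]
    rw [Finset.sum_congr rfl fun t _ => hpt t, Finset.sum_add_distrib, hD]
    congr 1
    rw [Finset.sum_comm]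
    have hk : ∀ k : Fin K, ∑ t ∈ Fintype.piFinset (Omg K N E B), ∑ j ∈ Finset.univ.erase k,
        (inner ℝ (mAvg N E B g k (t k)) (mAvg N E B g j (t j)) : ℝ)
        = (∏ i, ((N i).choose (B i) : ℝ) ^ E i)
            * ∑ j ∈ Finset.univ.erase k, (inner ℝ (aMean N g k) (aMean N g j) : ℝ) := by
      intro k
      rw [Finset.sum_comm]
      have h1 : ∀ j ∈ Finset.univ.erase k, ∑ t ∈ Fintype.piFinset (Omg K N E B),
          (inner ℝ (mAvg N E B g k (t k)) (mAvg N E B g j (t j)) : ℝ)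
          = (∏ i, ((N i).choose (B i) : ℝ) ^ E i)
              * (inner ℝ (aMean N g k) (aMean N g j) : ℝ) := by
        intro j hj
        exact hOkj k j (fun h => (Finset.ne_of_mem_erase hj) h.symm)
      rw [Finset.sum_congr rfl h1, ← Finset.mul_sum]
    rw [Finset.sum_congr rfl fun k _ => hk k, ← Finset.mul_sum]
    congr 1
    have h2 : ∀ k : Fin K, ∑ j ∈ Finset.univ.erase k, (inner ℝ (aMean N g k) (aMean N g j) : ℝ)
        = (∑ j, (inner ℝ (aMean N g k) (aMean N g j) : ℝ)) - ‖aMean N g k‖ ^ 2 := by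
      intro k
      rw [Finset.sum_erase_eq_sub (Finset.mem_univ k), real_inner_self_eq_norm_sq]
    rw [Finset.sum_congr rfl fun k _ => h2 k, Finset.sum_sub_distrib,
      sum_sum_inner Finset.univ (aMean N g), hnormsumA]
  -- SUM1
  have hSUM1 : ∑ S ∈ Finset.powersetCard L (Finset.univ : Finset (Fin K)),
        ∑ t ∈ Fintype.piFinset (Omg K N E B), ‖∑ ℓ ∈ S, mAvg N E B g ℓ (t ℓ)‖ ^ 2
      = (K1 : ℝ) * ((∏ j, ((N j).choose (B j) : ℝ) ^ E j)
            * ∑ k, (‖aMean N g k‖ ^ 2 + tauS N E B k * vVar N g k))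
        + (K2 : ℝ) * ((∏ j, ((N j).choose (B j) : ℝ) ^ E j)
            * ((K : ℝ) ^ 2 * ‖aB‖ ^ 2 - ∑ k, ‖aMean N g k‖ ^ 2)) := by
    rw [Finset.sum_comm]
    have hper : ∀ t : (k : Fin K) → Fin (E k) → Finset (Fin (N k)),
        ∑ S ∈ Finset.powersetCard L (Finset.univ : Finset (Fin K)),
            ‖∑ ℓ ∈ S, mAvg N E B g ℓ (t ℓ)‖ ^ 2
          = (K1 : ℝ) * ∑ k, ‖mAvg N E B g k (t k)‖ ^ 2
            + (K2 : ℝ) * (‖∑ k, mAvg N E B g k (t k)‖ ^ 2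
                - ∑ k, ‖mAvg N E B g k (t k)‖ ^ 2) :=
      fun t => sum_powersetCard_normsq (fun k => mAvg N E B g k (t k)) K1 K2 hK1 hK2
    rw [Finset.sum_congr rfl fun t _ => hper t, Finset.sum_add_distrib, ← Finset.mul_sum,
      ← Finset.mul_sum, Finset.sum_sub_distrib, hD, hG]
    ring
  -- SUM2
  have hSUM2 : ∑ S ∈ Finset.powersetCard L (Finset.univ : Finset (Fin K)),
        ∑ t ∈ Fintype.piFinset (Omg K N E B),
          (inner ℝ (∑ ℓ ∈ S, mAvg N E B g ℓ (t ℓ)) aB : ℝ)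
      = (K1 : ℝ) * ((∏ j, ((N j).choose (B j) : ℝ) ^ E j) * ((K : ℝ) * ‖aB‖ ^ 2)) := by
    rw [Finset.sum_comm]
    have hper : ∀ t : (k : Fin K) → Fin (E k) → Finset (Fin (N k)),
        ∑ S ∈ Finset.powersetCard L (Finset.univ : Finset (Fin K)),
            (inner ℝ (∑ ℓ ∈ S, mAvg N E B g ℓ (t ℓ)) aB : ℝ)
          = (K1 : ℝ) * ∑ k, (inner ℝ (mAvg N E B g k (t k)) aB : ℝ) := by
      intro t
      have h1 : ∀ S ∈ Finset.powersetCard L (Finset.univ : Finset (Fin K)),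
          (inner ℝ (∑ ℓ ∈ S, mAvg N E B g ℓ (t ℓ)) aB : ℝ)
            = ∑ ℓ ∈ S, (inner ℝ (mAvg N E B g ℓ (t ℓ)) aB : ℝ) :=
        fun S _ => sum_inner _ _ _
      rw [Finset.sum_congr rfl h1,
        sum_powersetCard_sum L (fun k => (inner ℝ (mAvg N E B g k (t k)) aB : ℝ))]
      simp only [hK1, nsmul_eq_mul]
      rw [← Finset.mul_sum]
    rw [Finset.sum_congr rfl fun t _ => hper t, ← Finset.mul_sum]
    have h2 : ∑ t ∈ Fintype.piFinset (Omg K N E B),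
        ∑ k, (inner ℝ (mAvg N E B g k (t k)) aB : ℝ)
        = (∏ j, ((N j).choose (B j) : ℝ) ^ E j) * ((K : ℝ) * ‖aB‖ ^ 2) := by
      rw [Finset.sum_comm, Finset.sum_congr rfl fun k _ => hIk k, ← Finset.mul_sum, ← sum_inner,
        hIP]
    rw [h2]
  -- SUM3
  have hSUM3 : ∑ S ∈ Finset.powersetCard L (Finset.univ : Finset (Fin K)),
        ∑ _t ∈ Fintype.piFinset (Omg K N E B), ‖aB‖ ^ 2
      = (K.choose L : ℝ) * ((∏ j, ((N j).choose (B j) : ℝ) ^ E j) * ‖aB‖ ^ 2) := by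
    rw [Finset.sum_const, Finset.sum_const, Finset.card_powersetCard, Finset.card_univ,
      Fintype.card_fin, smul_smul, nsmul_eq_mul]
    push_cast [hcard]
    ring
  -- pointwise expansion and assembly
  have hbig : ∑ S ∈ Finset.powersetCard L (Finset.univ : Finset (Fin K)),
        ∑ t ∈ Fintype.piFinset (Omg K N E B),
          ‖(L : ℝ)⁻¹ • (∑ ℓ ∈ S, mAvg N E B g ℓ (t ℓ)) - aB‖ ^ 2
      = (L : ℝ)⁻¹ ^ 2 * (∑ S ∈ Finset.powersetCard L (Finset.univ : Finset (Fin K)),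
            ∑ t ∈ Fintype.piFinset (Omg K N E B), ‖∑ ℓ ∈ S, mAvg N E B g ℓ (t ℓ)‖ ^ 2)
        - 2 * (L : ℝ)⁻¹ * (∑ S ∈ Finset.powersetCard L (Finset.univ : Finset (Fin K)),
            ∑ t ∈ Fintype.piFinset (Omg K N E B),
              (inner ℝ (∑ ℓ ∈ S, mAvg N E B g ℓ (t ℓ)) aB : ℝ))
        + ∑ S ∈ Finset.powersetCard L (Finset.univ : Finset (Fin K)),
            ∑ _t ∈ Fintype.piFinset (Omg K N E B), ‖aB‖ ^ 2 := by
    have hpt : ∀ (S : Finset (Fin K)) (t : (k : Fin K) → Fin (E k) → Finset (Fin (N k))),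
        ‖(L : ℝ)⁻¹ • (∑ ℓ ∈ S, mAvg N E B g ℓ (t ℓ)) - aB‖ ^ 2
          = (L : ℝ)⁻¹ ^ 2 * ‖∑ ℓ ∈ S, mAvg N E B g ℓ (t ℓ)‖ ^ 2
            - 2 * (L : ℝ)⁻¹ * (inner ℝ (∑ ℓ ∈ S, mAvg N E B g ℓ (t ℓ)) aB : ℝ)
            + ‖aB‖ ^ 2 := by
      intro S t
      rw [norm_sub_sq_real, normsq_smul, real_inner_smul_left]
      ring
    rw [Finset.sum_congr rfl fun S _ => Finset.sum_congr rfl fun t _ => hpt S t]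
    simp only [Finset.sum_add_distrib, Finset.sum_sub_distrib, ← Finset.mul_sum]
  rw [hbig, hSUM1, hSUM2, hSUM3, hvarA]
  -- final scalar algebra
  have hK1R : (K1 : ℝ) = (K.choose L : ℝ) * (L : ℝ) / (K : ℝ) := by
    rw [eq_div_iff hKR]
    exact fK1
  have hK2R : (K2 : ℝ) = (K.choose L : ℝ) * ((L : ℝ) * ((L : ℝ) - 1))
      / ((K : ℝ) * ((K : ℝ) - 1)) := by
    rw [eq_div_iff (mul_ne_zero hKR hK1ne)]
    exact fK2
  rw [hK1R, hK2R, Finset.sum_add_distrib]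
  field_simp
  ring

end S9
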